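/- Let n, k be positive integers with gcd(n, n−k) = 1, let 1 ≤ i ≤ min{k+1, n−k−1}, and let S_{k,i} be a primitive nonpowerful signed digraph whose underlying digraph is D_{k,i}. If all cycles of length n−k in S_{k,i} have the same sign, then for every 1 ≤ m ≤ n the m-th smallest local base is attained at v_m and equals l_{S_{k,i}}(m) = l_{S_{k,i}}(v_m) = (2n−2)(n−k) + 1 − i + m. -/

import Mathlib

/-- `f : ℕ → V` traces a directed walk of length `t` in the digraph with
adjacency relation `A` if consecutive vertices are joined by arcs. -/
def IsWalk {V : Type*} (A : V → V → Prop) (t : ℕ) (f : ℕ → V) : Prop :=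
  ∀ i < t, A (f i) (f (i + 1))

/-- There is a directed walk of length `t` from `u` to `v`. -/
def HasWalk {V : Type*} (A : V → V → Prop) (t : ℕ) (u v : V) : Prop :=
  ∃ f : ℕ → V, f 0 = u ∧ f t = v ∧ IsWalk A t f

/-- A digraph is strongly connected if every vertex can reach every vertex. -/
def StronglyConnected {V : Type*} (A : V → V → Prop) : Prop :=
  ∀ u v : V, ∃ t : ℕ, HasWalk A t u v

/-- A digraph is primitive if it is strongly connected and for some `t > 0`
there are directed walks of length `t` between every ordered pair of vertices. -/
def IsPrimitive {V : Type*} (A : V → V → Prop) : Prop :=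
  StronglyConnected A ∧ ∃ t : ℕ, 0 < t ∧ ∀ u v : V, HasWalk A t u v

/-- The local exponent at `u`: the least `l` such that for every `t ≥ l` and
every vertex `v` there is a directed walk of length `t` from `u` to `v`. -/
noncomputable def localExp {V : Type*} (A : V → V → Prop) (u : V) : ℕ :=
  sInf {l : ℕ | ∀ t ≥ l, ∀ v : V, HasWalk A t u v}

/-- `kthSmallest f k` is the `k`-th smallest element (1-indexed) of the
multiset of values of `f`. -/
noncomputable def kthSmallest {n : ℕ} (f : Fin n → ℕ) (k : ℕ) : ℕ :=
  (Multiset.sort (Finset.univ.val.map f) (· ≤ ·)).getD (k - 1) 0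

/-- A directed cycle of length `c` (a closed walk whose first `c` vertices are
pairwise distinct), given by its vertex function. -/
def IsCycle {V : Type*} (A : V → V → Prop) (c : ℕ) (f : ℕ → V) : Prop :=
  IsWalk A c f ∧ f c = f 0 ∧ ∀ i < c, ∀ j < c, f i = f j → i = j

/-- A signed digraph: each arc carries a sign `+1` or `-1`. -/
structure SignedDigraph (V : Type*) where
  Adj : V → V → Prop
  sgn : V → V → ℤ
  sgn_unit : ∀ u v : V, Adj u v → sgn u v = 1 ∨ sgn u v = -1

namespace SignedDigraph

variable {V : Type*} (S : SignedDigraph V)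

/-- The sign of the walk of length `t` traced by `f`. -/
def walkSign (t : ℕ) (f : ℕ → V) : ℤ :=
  ∏ i ∈ Finset.range t, S.sgn (f i) (f (i + 1))

/-- There is a pair of SSSD walks of length `t` from `u` to `v`: two walks with
the same endpoints and the same length but different signs. -/
def HasSSSD (t : ℕ) (u v : V) : Prop :=
  ∃ f g : ℕ → V,
    (f 0 = u ∧ f t = v ∧ IsWalk S.Adj t f) ∧
    (g 0 = u ∧ g t = v ∧ IsWalk S.Adj t g) ∧
    S.walkSign t f ≠ S.walkSign t g

/-- A signed digraph is primitive and nonpowerful if from some length on there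
are SSSD walk pairs between all ordered pairs of vertices. -/
def IsPrimitiveNonpowerful : Prop :=
  ∃ l : ℕ, 0 < l ∧ ∀ t ≥ l, ∀ u v : V, S.HasSSSD t u v

/-- The local base at vertex `u`: the least `l` such that for every `t ≥ l` and
every vertex `v` there is a pair of SSSD walks of length `t` from `u` to `v`. -/
noncomputable def localBase (u : V) : ℕ :=
  sInf {l : ℕ | ∀ t ≥ l, ∀ v : V, S.HasSSSD t u v}

/-- All directed cycles of length `c` in `S` have the same sign. -/
def SameSignCycles (c : ℕ) : Prop :=
  ∀ f g : ℕ → V, IsCycle S.Adj c f → IsCycle S.Adj c g →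
    S.walkSign c f = S.walkSign c g

end SignedDigraph

/-- Isomorphism of digraphs. -/
def DigraphIso {V W : Type*} (A : V → V → Prop) (B : W → W → Prop) : Prop :=
  ∃ e : V ≃ W, ∀ u v : V, A u v ↔ B (e u) (e v)

/-- The Hamilton cycle `Cₙ` on `v₁,…,vₙ` (here `vⱼ` is the vertex with 0-based
index `j-1`), with arcs `v₁ → vₙ` and `vⱼ → v_{j-1}` for `2 ≤ j ≤ n`. -/
def CnAdj (n : ℕ) : Fin n → Fin n → Prop := fun a b =>
  (a.val = 0 ∧ b.val = n - 1) ∨ a.val = b.val + 1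

/-- The digraph `D_{k,i}`: the Hamilton cycle `Cₙ` together with the arcs
`vⱼ → v_{n-k+j-1}` for `1 ≤ j ≤ i`. -/
def DkiAdj (n k i : ℕ) : Fin n → Fin n → Prop := fun a b =>
  CnAdj n a b ∨ ∃ j : ℕ, 1 ≤ j ∧ j ≤ i ∧ a.val = j - 1 ∧ b.val = n - k + j - 2

/-- The digraph `𝓛`: `Cₙ` together with the arcs `v₁ → v_{n-2}` and `v₃ → vₙ`. -/
def LAdj (n : ℕ) : Fin n → Fin n → Prop := fun a b =>
  CnAdj n a b ∨ (a.val = 0 ∧ b.val = n - 3) ∨ (a.val = 2 ∧ b.val = n - 1)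

/-- The digraph `F`: the `(n-1)`-cycle `v₁ → vₙ → v_{n-1} → v_{n-3} → ⋯ → v₂ → v₁`
together with the arcs `v₁ → v_{n-2}` and `v_{n-2} → v_{n-3}`. -/
def FAdj (n : ℕ) : Fin n → Fin n → Prop := fun a b =>
  (a.val = 0 ∧ b.val = n - 1) ∨ (a.val = n - 1 ∧ b.val = n - 2) ∨
  (a.val = n - 2 ∧ b.val = n - 4) ∨ (a.val = b.val + 1 ∧ 1 ≤ a.val ∧ a.val ≤ n - 4) ∨
  (a.val = 0 ∧ b.val = n - 3) ∨ (a.val = n - 3 ∧ b.val = n - 4)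

/-- The digraph `F₁`: the `(n-1)`-cycle `v₁ → v_{n-1} → v_{n-2} → ⋯ → v₂ → v₁`
together with the arcs `v₁ → v_{n-2}`, `v₂ → vₙ` and `vₙ → v_{n-1}`. -/
def F1Adj (n : ℕ) : Fin n → Fin n → Prop := fun a b =>
  (a.val = 0 ∧ b.val = n - 2) ∨ (a.val = b.val + 1 ∧ 1 ≤ a.val ∧ a.val ≤ n - 2) ∨
  (a.val = 0 ∧ b.val = n - 3) ∨ (a.val = 1 ∧ b.val = n - 1) ∨ (a.val = n - 1 ∧ b.val = n - 2)

/-- The digraph `F₂`: the `(n-1)`-cycle `v₁ → vₙ → v_{n-2} → v_{n-3} → ⋯ → v₂ → v₁`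
together with the arcs `v₁ → v_{n-2}`, `vₙ → v_{n-1}` and `v_{n-1} → v_{n-3}`. -/
def F2Adj (n : ℕ) : Fin n → Fin n → Prop := fun a b =>
  (a.val = 0 ∧ b.val = n - 1) ∨ (a.val = n - 1 ∧ b.val = n - 3) ∨
  (a.val = b.val + 1 ∧ 1 ≤ a.val ∧ a.val ≤ n - 3) ∨
  (a.val = 0 ∧ b.val = n - 3) ∨ (a.val = n - 1 ∧ b.val = n - 2) ∨ (a.val = n - 2 ∧ b.val = n - 4)

/-- The digraph `F₃`: the `(n-2)`-cycle `v₁ → v_{n-2} → v_{n-3} → ⋯ → v₂ → v₁`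
together with the arcs `v₁ → v_{n-1}`, `v_{n-1} → v_{n-2}`, `v₁ → vₙ` and `vₙ → v_{n-2}`. -/
def F3Adj (n : ℕ) : Fin n → Fin n → Prop := fun a b =>
  (a.val = 0 ∧ b.val = n - 3) ∨ (a.val = b.val + 1 ∧ 1 ≤ a.val ∧ a.val ≤ n - 3) ∨
  (a.val = 0 ∧ b.val = n - 2) ∨ (a.val = n - 2 ∧ b.val = n - 3) ∨
  (a.val = 0 ∧ b.val = n - 1) ∨ (a.val = n - 1 ∧ b.val = n - 3)

/-- The digraph `F₇`: the `(n-1)`-cycle `v₁ → v_{n-1} → v_{n-2} → ⋯ → v₂ → v₁`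
together with the arcs `v₁ → v_{n-2}`, `v₃ → vₙ` and `vₙ → v_{n-1}`. -/
def F7Adj (n : ℕ) : Fin n → Fin n → Prop := fun a b =>
  (a.val = 0 ∧ b.val = n - 2) ∨ (a.val = b.val + 1 ∧ 1 ≤ a.val ∧ a.val ≤ n - 2) ∨
  (a.val = 0 ∧ b.val = n - 3) ∨ (a.val = 2 ∧ b.val = n - 1) ∨ (a.val = n - 1 ∧ b.val = n - 2)

/-- The digraph `F'ᵢ` (for `2 ≤ i ≤ n-3`): the `(n-1)`-cycle
`v₁ → v_{n-1} → v_{n-2} → ⋯ → v₂ → v₁` together with the arcs `v₁ → v_{n-2}`,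
`v_{i+1} → vₙ` and `vₙ → v_{i-1}`. -/
def FpAdj (n i : ℕ) : Fin n → Fin n → Prop := fun a b =>
  (a.val = 0 ∧ b.val = n - 2) ∨ (a.val = b.val + 1 ∧ 1 ≤ a.val ∧ a.val ≤ n - 2) ∨
  (a.val = 0 ∧ b.val = n - 3) ∨ (a.val = i ∧ b.val = n - 1) ∨ (a.val = n - 1 ∧ b.val = i - 2)

/-- The digraph `𝓑₁`: `Cₙ` together with the arcs `v₁ → v_{n-3}` and `v₃ → v_{n-1}`. -/
def B1Adj (n : ℕ) : Fin n → Fin n → Prop := fun a b =>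
  CnAdj n a b ∨ (a.val = 0 ∧ b.val = n - 4) ∨ (a.val = 2 ∧ b.val = n - 2)

/-- The digraph `𝓑₂`: `Cₙ` together with the arcs `v₁ → v_{n-3}` and `v₄ → vₙ`. -/
def B2Adj (n : ℕ) : Fin n → Fin n → Prop := fun a b =>
  CnAdj n a b ∨ (a.val = 0 ∧ b.val = n - 4) ∨ (a.val = 3 ∧ b.val = n - 1)

/-- The digraph `𝓑₃`: `Cₙ` together with the arcs `v₁ → v_{n-3}`, `v₂ → v_{n-2}`
and `v₄ → vₙ`. -/
def B3Adj (n : ℕ) : Fin n → Fin n → Prop := fun a b =>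
  CnAdj n a b ∨ (a.val = 0 ∧ b.val = n - 4) ∨ (a.val = 1 ∧ b.val = n - 3) ∨
  (a.val = 3 ∧ b.val = n - 1)

/-- The digraph `𝓑₄`: `Cₙ` together with the arcs `v₁ → v_{n-3}`, `v₃ → v_{n-1}`
and `v₄ → vₙ`. -/
def B4Adj (n : ℕ) : Fin n → Fin n → Prop := fun a b =>
  CnAdj n a b ∨ (a.val = 0 ∧ b.val = n - 4) ∨ (a.val = 2 ∧ b.val = n - 2) ∨
  (a.val = 3 ∧ b.val = n - 1)

/-! ### Auxiliary development for `stmt2` -/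

namespace Stmt2Aux

/-- Bundled context for the proof of `stmt2`. -/
structure Ctx : Type where
  n : ℕ
  k : ℕ
  i : ℕ
  S : SignedDigraph (Fin n)
  hk : 1 ≤ k
  hi1 : 1 ≤ i
  hik : i ≤ k + 1
  hic : i + k + 1 ≤ n
  hgcd : Nat.gcd n (n - k) = 1
  hadj : S.Adj = DkiAdj n k i
  hsgn : S.SameSignCycles (n - k)

namespace Ctx

variable (C : Ctx)

/-- `c = n - k`, the short cycle length. -/
def c : ℕ := C.n - C.k

lemma hn3 : 3 ≤ C.n := by have := C.hk; have := C.hi1; have := C.hic; omega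

lemma hck : C.c + C.k = C.n := by have := C.hic; have := C.hi1; unfold c; omega

lemma hc2 : 2 ≤ C.c := by have := C.hck; have := C.hic; have := C.hi1; omega

lemma hcn : C.c + 1 ≤ C.n := by have := C.hck; have := C.hk; omega

lemma hicc : C.i + 1 ≤ C.c := by have := C.hck; have := C.hic; omega

lemma hci : C.c + C.i ≤ C.n + 1 := by have := C.hck; have := C.hik; omega

lemma hcop : Nat.Coprime C.n C.c := by
  have := C.hgcd; unfold Nat.Coprime; unfold c; exact this

lemma hn0 : 0 < C.n := by have := C.hn3; omega

/-- The vertex with (mod-reduced) index `x`. -/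
def v (x : ℕ) : Fin C.n := ⟨x % C.n, Nat.mod_lt _ C.hn0⟩

lemma v_val (x : ℕ) (hx : x < C.n) : (C.v x).val = x := Nat.mod_eq_of_lt hx

lemma v_eq (x : Fin C.n) : C.v x.val = x := by
  apply Fin.ext; exact C.v_val x.val x.isLt

/-- Sign of the (putative) arc from index `x` to index `y`. -/
def sg (x y : ℕ) : ℤ := C.S.sgn (C.v x) (C.v y)

/-- Sign of the down arc `x → x-1`. -/
def dn (x : ℕ) : ℤ := C.sg x (x - 1)

/-- Sign of the wrap arc `0 → n-1`. -/
def w0 : ℤ := C.sg 0 (C.n - 1)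

/-- Sign of the chord arc `τ → τ+c-1`. -/
def ch (τ : ℕ) : ℤ := C.sg τ (τ + C.c - 1)

/-- Product of down-arc signs from `x` down to `0`. -/
def Q (x : ℕ) : ℤ := ∏ y ∈ Finset.range x, C.dn (y + 1)

lemma Q_zero : C.Q 0 = 1 := by simp [Q]

lemma Q_succ (x : ℕ) : C.Q (x + 1) = C.Q x * C.dn (x + 1) :=
  Finset.prod_range_succ _ x

/-- Adjacency of the down arc. -/
lemma adj_down (x : ℕ) (h1 : 1 ≤ x) (h2 : x ≤ C.n - 1) :
    C.S.Adj (C.v x) (C.v (x - 1)) := by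
  rw [C.hadj]
  left; right
  rw [C.v_val x (by have := C.hn0; omega), C.v_val (x-1) (by have := C.hn0; omega)]
  omega

/-- Adjacency of the wrap arc. -/
lemma adj_wrap : C.S.Adj (C.v 0) (C.v (C.n - 1)) := by
  rw [C.hadj]
  left; left
  rw [C.v_val 0 C.hn0, C.v_val (C.n-1) (by have := C.hn0; omega)]
  exact ⟨rfl, rfl⟩

/-- Adjacency of a chord arc at tail `τ ≤ i - 1`. -/
lemma adj_chord (τ : ℕ) (hτ : τ + 1 ≤ C.i) :
    C.S.Adj (C.v τ) (C.v (τ + C.c - 1)) := by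
  have hci := C.hci
  have hc2 := C.hc2
  have hck := C.hck
  rw [C.hadj]
  right
  refine ⟨τ + 1, by omega, hτ, ?_, ?_⟩
  · rw [C.v_val τ (by omega)]; omega
  · rw [C.v_val (τ + C.c - 1) (by omega)]
    unfold c; omega

/-- Any arc is a wrap, a down arc, or a chord. -/
lemma adj_cases {a b : Fin C.n} (h : C.S.Adj a b) :
    (a.val = 0 ∧ b.val = C.n - 1) ∨ (a.val = b.val + 1) ∨
    (a.val + 1 ≤ C.i ∧ b.val + 1 = a.val + C.c) := by
  rw [C.hadj] at h
  rcases h with (h | h) | ⟨j, hj1, hj2, ha, hb⟩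
  · exact Or.inl h
  · exact Or.inr (Or.inl h)
  · right; right
    have hck := C.hck
    have hc2 := C.hc2
    constructor
    · omega
    · have : b.val = C.n - C.k + j - 2 := hb
      unfold c; omega

/-- All relevant sign quantities are units. -/
lemma sgn_sq {a b : Fin C.n} (h : C.S.Adj a b) : C.S.sgn a b * C.S.sgn a b = 1 := by
  rcases C.S.sgn_unit a b h with h' | h' <;> rw [h'] <;> norm_num

lemma dn_sq (x : ℕ) (h1 : 1 ≤ x) (h2 : x ≤ C.n - 1) : C.dn x * C.dn x = 1 :=
  C.sgn_sq (C.adj_down x h1 h2)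

lemma w0_sq : C.w0 * C.w0 = 1 := C.sgn_sq C.adj_wrap

lemma ch_sq (τ : ℕ) (hτ : τ + 1 ≤ C.i) : C.ch τ * C.ch τ = 1 :=
  C.sgn_sq (C.adj_chord τ hτ)

lemma Q_sq (x : ℕ) (hx : x ≤ C.n - 1) : C.Q x * C.Q x = 1 := by
  induction x with
  | zero => simp [Q]
  | succ m ih =>
    rw [Q_succ]
    have h1 : C.Q m * C.Q m = 1 := ih (by omega)
    have h2 : C.dn (m+1) * C.dn (m+1) = 1 := C.dn_sq (m+1) (by omega) (by omega)
    calc C.Q m * C.dn (m+1) * (C.Q m * C.dn (m+1))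
        = (C.Q m * C.Q m) * (C.dn (m+1) * C.dn (m+1)) := by ring
      _ = 1 := by rw [h1, h2]; ring

/-- Sign of the Hamilton cycle. -/
def del : ℤ := C.w0 * C.Q (C.n - 1)

lemma del_sq : C.del * C.del = 1 := by
  unfold del
  have h1 := C.w0_sq
  have h2 := C.Q_sq (C.n - 1) (le_refl _)
  calc C.w0 * C.Q (C.n-1) * (C.w0 * C.Q (C.n-1))
      = (C.w0 * C.w0) * (C.Q (C.n-1) * C.Q (C.n-1)) := by ring
    _ = 1 := by rw [h1, h2]; ring

/-- Sign of the short cycle through the chord at `0`. -/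
def eps : ℤ := C.ch 0 * C.Q (C.c - 1)

lemma eps_sq : C.eps * C.eps = 1 := by
  unfold eps
  have h1 := C.ch_sq 0 C.hi1
  have h2 := C.Q_sq (C.c - 1) (by have := C.hcn; omega)
  calc C.ch 0 * C.Q (C.c-1) * (C.ch 0 * C.Q (C.c-1))
      = (C.ch 0 * C.ch 0) * (C.Q (C.c-1) * C.Q (C.c-1)) := by ring
    _ = 1 := by rw [h1, h2]; ring

end Ctx

end Stmt2Aux
namespace Stmt2Aux
namespace Ctx

variable (C : Ctx)

lemma Q_add (x j : ℕ) :
    C.Q (x + j) = C.Q x * ∏ y ∈ Finset.range j, C.dn (x + 1 + y) := by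
  induction j with
  | zero => simp [Q]
  | succ m ih =>
    rw [show x + (m+1) = (x + m) + 1 by omega, Q_succ, ih,
      Finset.prod_range_succ, mul_assoc]
    congr 2
    have : x + 1 + m = x + m + 1 := by omega
    rw [this]

/-- `HWS t u v σ`: there is a walk of length `t` from `u` to `v` of sign `σ`. -/
def HWS (t : ℕ) (u v : Fin C.n) (σ : ℤ) : Prop :=
  ∃ f : ℕ → Fin C.n, f 0 = u ∧ f t = v ∧ IsWalk C.S.Adj t f ∧ C.S.walkSign t f = σ

lemma hws_nil (u : Fin C.n) : C.HWS 0 u u 1 :=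
  ⟨fun _ => u, rfl, rfl, fun _ h => absurd h (by omega), by simp [SignedDigraph.walkSign]⟩

lemma hws_single {u v : Fin C.n} (h : C.S.Adj u v) : C.HWS 1 u v (C.S.sgn u v) := by
  refine ⟨fun j => if j = 0 then u else v, by simp, by simp, ?_, ?_⟩
  · intro j hj
    have : j = 0 := by omega
    subst this; simpa using h
  · simp [SignedDigraph.walkSign]

lemma hws_append {t₁ t₂ : ℕ} {u v w : Fin C.n} {σ₁ σ₂ : ℤ}
    (h₁ : C.HWS t₁ u v σ₁) (h₂ : C.HWS t₂ v w σ₂) :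
    C.HWS (t₁ + t₂) u w (σ₁ * σ₂) := by
  obtain ⟨f, hf0, hft, hfw, hfs⟩ := h₁
  obtain ⟨g, hg0, hgt, hgw, hgs⟩ := h₂
  refine ⟨fun j => if j < t₁ then f j else g (j - t₁), ?_, ?_, ?_, ?_⟩
  · by_cases h : 0 < t₁
    · simp [h, hf0]
    · have ht : t₁ = 0 := by omega
      subst ht
      show (if (0:ℕ) < 0 then f 0 else g (0 - 0)) = u
      rw [if_neg (by omega : ¬ (0:ℕ) < 0), Nat.sub_zero, hg0, ← hf0, ← hft]
  · have hlt : ¬ (t₁ + t₂ < t₁) := by omega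
    simp only [if_neg hlt]
    rw [show t₁ + t₂ - t₁ = t₂ by omega, hgt]
  · intro j hj
    by_cases h1 : j + 1 < t₁
    · simp only [show j < t₁ by omega, if_pos, h1, if_true]
      exact hfw j (by omega)
    · by_cases h2 : j < t₁
      · have hj1 : j + 1 = t₁ := by omega
        simp only [h2, if_true, if_neg h1]
        rw [show j + 1 - t₁ = 0 by omega, hg0, ← hft, ← hj1]
        exact hfw j (by omega)
      · simp only [h2, if_false, if_neg (show ¬ (j+1 < t₁) by omega)]
        rw [show j + 1 - t₁ = (j - t₁) + 1 by omega]
        exact hgw (j - t₁) (by omega)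
  · unfold SignedDigraph.walkSign
    rw [Finset.prod_range_add]
    have e1 : ∀ j ∈ Finset.range t₁,
        C.S.sgn (if j < t₁ then f j else g (j - t₁))
          (if j + 1 < t₁ then f (j+1) else g (j+1-t₁)) =
        C.S.sgn (f j) (f (j+1)) := by
      intro j hj
      rw [Finset.mem_range] at hj
      by_cases h1 : j + 1 < t₁
      · simp [hj, h1]
      · have hj1 : j + 1 = t₁ := by omega
        simp only [hj, if_true, if_neg h1]
        rw [show j + 1 - t₁ = 0 by omega, hg0, ← hft, hj1]
    have e2 : ∀ j ∈ Finset.range t₂,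
        C.S.sgn (if t₁ + j < t₁ then f (t₁+j) else g (t₁+j-t₁))
          (if t₁ + j + 1 < t₁ then f (t₁+j+1) else g (t₁+j+1-t₁)) =
        C.S.sgn (g j) (g (j+1)) := by
      intro j hj
      rw [if_neg (by omega), if_neg (by omega),
        show t₁ + j - t₁ = j by omega, show t₁ + j + 1 - t₁ = j + 1 by omega]
    rw [Finset.prod_congr rfl e1, Finset.prod_congr rfl e2]
    unfold SignedDigraph.walkSign at hfs hgs
    rw [hfs, hgs]

lemma hws_iterate {t : ℕ} {u : Fin C.n} {σ : ℤ} (h : C.HWS t u u σ) (m : ℕ) :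
    C.HWS (m * t) u u (σ ^ m) := by
  induction m with
  | zero => simpa using C.hws_nil u
  | succ p ih =>
    have := C.hws_append ih h
    rw [show p * t + t = (p+1)*t by ring, show σ^p * σ = σ^(p+1) by ring] at this
    exact this

/-- Descend `j` steps from `x`. -/
lemma hws_down (x j : ℕ) (hx : x ≤ C.n - 1) (hj : j ≤ x) :
    C.HWS j (C.v x) (C.v (x - j)) (C.Q x * C.Q (x - j)) := by
  induction j with
  | zero =>
    have h := C.hws_nil (C.v x)
    rw [show x - 0 = x from rfl]
    rwa [C.Q_sq x hx]
  | succ m ih =>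
    have step : C.HWS 1 (C.v (x - m)) (C.v (x - m - 1)) (C.dn (x - m)) :=
      C.hws_single (C.adj_down (x - m) (by omega) (by omega))
    have := C.hws_append (ih (by omega)) step
    rw [show x - m - 1 = x - (m+1) by omega] at this
    have hq : C.Q x * C.Q (x - m) * C.dn (x - m) = C.Q x * C.Q (x - (m+1)) := by
      have : C.Q (x - (m+1)) * C.dn (x - m) = C.Q (x - m) := by
        have := C.Q_succ (x - (m+1))
        rw [show x - (m+1) + 1 = x - m by omega] at this
        rw [← this]
      rw [← this]
      have hd := C.dn_sq (x - m) (by omega) (by omega)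
      rw [← mul_assoc]
      calc C.Q x * C.Q (x-(m+1)) * C.dn (x-m) * C.dn (x-m)
          = C.Q x * C.Q (x-(m+1)) * (C.dn (x-m) * C.dn (x-m)) := by ring
        _ = C.Q x * C.Q (x-(m+1)) := by rw [hd]; ring
    rwa [hq] at this

/-- The wrap arc with sign `w0`. -/
lemma hws_wrap : C.HWS 1 (C.v 0) (C.v (C.n - 1)) C.w0 := C.hws_single C.adj_wrap

/-- From `0` to any `v` in `n - v` steps, sign `δ · Q v`. -/
lemma hws_T (x : ℕ) (hx : x ≤ C.n - 1) :
    C.HWS (C.n - x) (C.v 0) (C.v x) (C.del * C.Q x) := by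
  have h2 : C.HWS (C.n - 1 - x) (C.v (C.n-1)) (C.v x)
      (C.Q (C.n-1) * C.Q x) := by
    have := C.hws_down (C.n - 1) (C.n - 1 - x) (le_refl _) (by omega)
    rwa [show C.n - 1 - (C.n - 1 - x) = x by omega] at this
  have := C.hws_append C.hws_wrap h2
  rw [show 1 + (C.n - 1 - x) = C.n - x by have := C.hn0; omega] at this
  rwa [show C.w0 * (C.Q (C.n-1) * C.Q x) = C.del * C.Q x by unfold del; ring] at this

/-- The full Hamilton loop at `0`. -/
lemma hws_loop : C.HWS C.n (C.v 0) (C.v 0) C.del := by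
  have := C.hws_T 0 (by have := C.hn0; omega)
  rw [Nat.sub_zero] at this
  rwa [C.Q_zero, mul_one] at this

/-- A chord arc. -/
lemma hws_chord (τ : ℕ) (hτ : τ + 1 ≤ C.i) :
    C.HWS 1 (C.v τ) (C.v (τ + C.c - 1)) (C.ch τ) := C.hws_single (C.adj_chord τ hτ)

end Ctx
end Stmt2Aux
namespace Stmt2Aux
namespace Ctx

variable (C : Ctx)

/-- The canonical short cycle through the chord at `τ`. -/
def gcyc (τ : ℕ) : ℕ → Fin C.n := fun s => if s = 0 then C.v τ else C.v (τ + C.c - s)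

lemma gcyc_isCycle (τ : ℕ) (hτ : τ + 1 ≤ C.i) : IsCycle C.S.Adj C.c (C.gcyc τ) := by
  have hc2 := C.hc2
  have hci := C.hci
  have hicc := C.hicc
  have hbound : τ + C.c - 1 < C.n := by omega
  refine ⟨?_, ?_, ?_⟩
  · intro s hs
    unfold gcyc
    by_cases h0 : s = 0
    · subst h0
      rw [if_pos rfl, if_neg (by omega)]
      exact C.adj_chord τ hτ
    · rw [if_neg h0, if_neg (by omega)]
      have : τ + C.c - (s + 1) = (τ + C.c - s) - 1 := by omega
      rw [this]
      exact C.adj_down (τ + C.c - s) (by omega) (by omega)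
  · unfold gcyc
    rw [if_neg (by omega), if_pos rfl]
    have h : τ + C.c - C.c = τ := by omega
    rw [h]
  · intro s hs s' hs' he
    unfold gcyc at he
    by_cases h0 : s = 0 <;> by_cases h0' : s' = 0
    · omega
    · exfalso
      rw [if_pos h0, if_neg h0'] at he
      have := congrArg Fin.val he
      rw [C.v_val τ (by omega), C.v_val (τ + C.c - s') (by omega)] at this
      omega
    · exfalso
      rw [if_neg h0, if_pos h0'] at he
      have := congrArg Fin.val he
      rw [C.v_val τ (by omega), C.v_val (τ + C.c - s) (by omega)] at this
      omega
    · rw [if_neg h0, if_neg h0'] at he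
      have := congrArg Fin.val he
      rw [C.v_val (τ + C.c - s) (by omega), C.v_val (τ + C.c - s') (by omega)] at this
      omega

lemma gcyc_sign (τ : ℕ) (hτ : τ + 1 ≤ C.i) :
    C.S.walkSign C.c (C.gcyc τ) = C.ch τ * ∏ y ∈ Finset.range (C.c - 1), C.dn (τ + 1 + y) := by
  have hc2 := C.hc2
  unfold SignedDigraph.walkSign
  rw [show C.c = (C.c - 1) + 1 by omega, Finset.prod_range_succ']
  have e0 : C.S.sgn (C.gcyc τ 0) (C.gcyc τ (0 + 1)) = C.ch τ := by
    unfold gcyc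
    rw [if_pos rfl, if_neg (by omega)]
    rfl
  have e1 : ∀ s ∈ Finset.range (C.c - 1),
      C.S.sgn (C.gcyc τ (s+1)) (C.gcyc τ (s+1+1)) = C.dn (τ + C.c - (s+1)) := by
    intro s hs
    rw [Finset.mem_range] at hs
    unfold gcyc
    rw [if_neg (by omega), if_neg (by omega)]
    unfold dn sg
    have h : τ + C.c - (s + 1 + 1) = τ + C.c - (s + 1) - 1 := by omega
    rw [h]
  rw [Finset.prod_congr rfl e1, e0]
  rw [mul_comm]
  congr 1
  rw [show C.c - 1 + 1 - 1 = C.c - 1 by omega]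
  have hrefl := Finset.prod_range_reflect (fun y => C.dn (τ + 1 + y)) (C.c - 1)
  rw [← hrefl]
  apply Finset.prod_congr rfl
  intro s hs
  rw [Finset.mem_range] at hs
  have h : τ + C.c - (s + 1) = τ + 1 + (C.c - 1 - 1 - s) := by omega
  rw [h]

/-- All chords have the short-cycle sign `ε`. -/
lemma eps_chord (τ : ℕ) (hτ : τ + 1 ≤ C.i) :
    C.ch τ * C.Q (τ + C.c - 1) = C.eps * C.Q τ := by
  have hc2 := C.hc2
  have hss : C.S.walkSign C.c (C.gcyc τ) = C.S.walkSign C.c (C.gcyc 0) := by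
    have h := C.hsgn (C.gcyc τ) (C.gcyc 0)
      (by have := C.gcyc_isCycle τ hτ; rwa [show C.n - C.k = C.c from rfl])
      (by have := C.gcyc_isCycle 0 C.hi1; rwa [show C.n - C.k = C.c from rfl])
    rwa [show C.n - C.k = C.c from rfl] at h
  have h1 := C.gcyc_sign τ hτ
  have h0 := C.gcyc_sign 0 C.hi1
  have heps : C.S.walkSign C.c (C.gcyc 0) = C.eps := by
    rw [h0]
    unfold eps
    congr 1
    have := C.Q_add 0 (C.c - 1)
    rw [C.Q_zero, one_mul] at this
    rw [show (0:ℕ) + (C.c - 1) = C.c - 1 by omega] at this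
    rw [this]
  have hq : C.Q (τ + C.c - 1) = C.Q τ * ∏ y ∈ Finset.range (C.c - 1), C.dn (τ + 1 + y) := by
    have := C.Q_add τ (C.c - 1)
    rwa [show τ + (C.c - 1) = τ + C.c - 1 by omega] at this
  rw [hq, ← mul_assoc, mul_comm (C.ch τ) (C.Q τ), mul_assoc, ← h1, hss, heps, mul_comm]

end Ctx
end Stmt2Aux
namespace Stmt2Aux
namespace Ctx

variable (C : Ctx)

/-- Structure of an arbitrary walk: wrap count `w`, chord count `a`,
length equation, sign formula, and the tail-feasibility condition. -/
lemma walk_struct (t : ℕ) (f : ℕ → Fin C.n) (hf : IsWalk C.S.Adj t f) :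
    ∃ w a : ℕ,
      (f 0).val + w * C.n + a * C.c = t + (f t).val ∧
      C.S.walkSign t f * C.Q (f t).val = C.del ^ w * C.eps ^ a * C.Q (f 0).val ∧
      (w = 0 → 1 ≤ a → (f t).val + 2 ≤ C.c + C.i) := by
  induction t with
  | zero =>
    refine ⟨0, 0, by omega, ?_, by omega⟩
    simp [SignedDigraph.walkSign]
  | succ t ih =>
    obtain ⟨w, a, hlen, hsign, hnec⟩ := ih (fun j hj => hf j (by omega))
    have harc := hf t (by omega)
    have hstep : C.S.walkSign (t+1) f = C.S.walkSign t f * C.S.sgn (f t) (f (t+1)) :=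
      Finset.prod_range_succ _ t
    have hxlt : (f t).val < C.n := (f t).isLt
    have hxlt' : (f (t+1)).val < C.n := (f (t+1)).isLt
    have hc2 := C.hc2
    have hicc := C.hicc
    rcases C.adj_cases harc with ⟨hx, hx'⟩ | hx | ⟨hi, hx'⟩
    · -- wrap
      have hmul : (w+1) * C.n = w * C.n + C.n := by ring
      refine ⟨w + 1, a, by omega, ?_, by omega⟩
      have e : C.S.sgn (f t) (f (t+1)) = C.w0 := by
        unfold w0 sg
        congr 1
        · apply Fin.ext; rw [C.v_val 0 (by omega)]; exact hx
        · apply Fin.ext; rw [C.v_val (C.n - 1) (by omega)]; exact hx'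
      rw [hstep, e, hx']
      rw [hx, C.Q_zero, mul_one] at hsign
      rw [show C.S.walkSign t f * C.w0 * C.Q (C.n - 1)
          = C.S.walkSign t f * (C.w0 * C.Q (C.n - 1)) by ring, hsign]
      rw [pow_succ]
      unfold del
      ring
    · -- down
      refine ⟨w, a, by omega, ?_, by omega⟩
      have e : C.S.sgn (f t) (f (t+1)) = C.dn (f t).val := by
        unfold dn sg
        congr 1
        · exact (C.v_eq (f t)).symm
        · apply Fin.ext; rw [C.v_val ((f t).val - 1) (by omega)]; omega
      rw [hstep, e]
      have hq : C.Q (f t).val = C.Q (f (t+1)).val * C.dn (f t).val := by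
        have := C.Q_succ (f (t+1)).val
        rw [show (f (t+1)).val + 1 = (f t).val from hx.symm] at this
        rw [this]
      calc C.S.walkSign t f * C.dn (f t).val * C.Q (f (t+1)).val
          = C.S.walkSign t f * (C.Q (f (t+1)).val * C.dn (f t).val) := by ring
        _ = C.S.walkSign t f * C.Q (f t).val := by rw [← hq]
        _ = C.del ^ w * C.eps ^ a * C.Q (f 0).val := hsign
    · -- chord
      have hmul : (a+1) * C.c = a * C.c + C.c := by ring
      refine ⟨w, a + 1, by omega, ?_, by omega⟩
      have e : C.S.sgn (f t) (f (t+1)) = C.ch (f t).val := by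
        unfold ch sg
        congr 1
        · exact (C.v_eq (f t)).symm
        · apply Fin.ext; rw [C.v_val ((f t).val + C.c - 1) (by omega)]; omega
      have hec := C.eps_chord (f t).val hi
      rw [show (f t).val + C.c - 1 = (f (t+1)).val by omega] at hec
      rw [hstep, e]
      calc C.S.walkSign t f * C.ch (f t).val * C.Q (f (t+1)).val
          = C.S.walkSign t f * (C.ch (f t).val * C.Q (f (t+1)).val) := by ring
        _ = C.S.walkSign t f * (C.eps * C.Q (f t).val) := by rw [hec]
        _ = (C.S.walkSign t f * C.Q (f t).val) * C.eps := by ring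
        _ = C.del ^ w * C.eps ^ a * C.Q (f 0).val * C.eps := by rw [hsign]
        _ = C.del ^ w * C.eps ^ (a+1) * C.Q (f 0).val := by rw [pow_succ]; ring

end Ctx
end Stmt2Aux
namespace Stmt2Aux

lemma nat_helper (n c w₁ a₁ w₂ a₂ : ℕ) (hc : 0 < c)
    (hcop : Nat.Coprime n c) (heq : w₁ * n + a₁ * c = w₂ * n + a₂ * c)
    (hw : w₂ ≤ w₁) : ∃ s : ℕ, w₁ = c * s + w₂ ∧ a₂ = n * s + a₁ := by
  have ha : a₁ ≤ a₂ := by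
    by_contra h
    push_neg at h
    have h1 : a₂ * c < a₁ * c := Nat.mul_lt_mul_of_lt_of_le h (le_refl c) hc
    have h2 : w₂ * n ≤ w₁ * n := Nat.mul_le_mul_right n hw
    have h3 : w₁ * n < w₂ * n := by linarith
    linarith
  have hz : (w₁:ℤ) * n + a₁ * c = w₂ * n + a₂ * c := by exact_mod_cast heq
  have hWA : (w₁ - w₂) * n = (a₂ - a₁) * c := by
    zify [hw, ha]
    linarith
  have hdvd : c ∣ (w₁ - w₂) := by
    have : c ∣ (w₁ - w₂) * n := ⟨a₂ - a₁, by rw [hWA]; ring⟩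
    exact (Nat.Coprime.dvd_of_dvd_mul_right (hcop.symm) this)
  obtain ⟨s, hs⟩ := hdvd
  refine ⟨s, ?_, ?_⟩
  · have := (Nat.sub_eq_iff_eq_add hw).mp hs
    omega
  · have h4 : (a₂ - a₁) * c = (n * s) * c := by
      rw [← hWA, hs]; ring
    have h5 : a₂ - a₁ = n * s := Nat.eq_of_mul_eq_mul_right hc h4
    omega

lemma pow_sq_one {x : ℤ} (h : x * x = 1) (m : ℕ) : x ^ m * x ^ m = 1 := by
  rw [← mul_pow, h, one_pow]

namespace Ctx

variable (C : Ctx)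

lemma sign_eq_of_one (h1 : C.del ^ C.c * C.eps ^ C.n = 1)
    {w₁ a₁ w₂ a₂ : ℕ}
    (heq : w₁ * C.n + a₁ * C.c = w₂ * C.n + a₂ * C.c) :
    C.del ^ w₁ * C.eps ^ a₁ = C.del ^ w₂ * C.eps ^ a₂ := by
  have hdc : C.del ^ C.c = C.eps ^ C.n := by
    have he := pow_sq_one C.eps_sq C.n
    calc C.del ^ C.c = C.del ^ C.c * (C.eps ^ C.n * C.eps ^ C.n) := by rw [he]; ring
      _ = (C.del ^ C.c * C.eps ^ C.n) * C.eps ^ C.n := by ring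
      _ = C.eps ^ C.n := by rw [h1]; ring
  have main : ∀ w₁' a₁' w₂' a₂' : ℕ, w₂' ≤ w₁' →
      w₁' * C.n + a₁' * C.c = w₂' * C.n + a₂' * C.c →
      C.del ^ w₁' * C.eps ^ a₁' = C.del ^ w₂' * C.eps ^ a₂' := by
    intro w₁' a₁' w₂' a₂' hw heq'
    obtain ⟨s, hw1, ha2⟩ := nat_helper C.n C.c w₁' a₁' w₂' a₂'
      (by have := C.hc2; omega) C.hcop heq' hw
    rw [hw1, ha2, pow_add, pow_add, pow_mul, pow_mul, hdc]
    ring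
  rcases le_total w₂ w₁ with h | h
  · exact main w₁ a₁ w₂ a₂ h heq
  · exact (main w₂ a₂ w₁ a₁ h heq.symm).symm

/-- Nonpowerfulness forces `δ^c · ε^n = -1`. -/
lemma key (hpn : C.S.IsPrimitiveNonpowerful) :
    C.del ^ C.c * C.eps ^ C.n = -1 := by
  have hu : C.del ^ C.c * C.eps ^ C.n * (C.del ^ C.c * C.eps ^ C.n) = 1 := by
    have h1 := pow_sq_one C.del_sq C.c
    have h2 := pow_sq_one C.eps_sq C.n
    calc C.del ^ C.c * C.eps ^ C.n * (C.del ^ C.c * C.eps ^ C.n)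
        = (C.del ^ C.c * C.del ^ C.c) * (C.eps ^ C.n * C.eps ^ C.n) := by ring
      _ = 1 := by rw [h1, h2]; ring
  rcases mul_self_eq_one_iff.mp hu with h1 | h1
  · exfalso
    obtain ⟨l, hl0, hall⟩ := hpn
    obtain ⟨f, g, ⟨hf0, hft, hfw⟩, ⟨hg0, hgt, hgw⟩, hne⟩ := hall l le_rfl (C.v 0) (C.v 0)
    obtain ⟨w₁, a₁, hlen₁, hsgn₁, -⟩ := C.walk_struct l f hfw
    obtain ⟨w₂, a₂, hlen₂, hsgn₂, -⟩ := C.walk_struct l g hgw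
    rw [hf0, hft] at hlen₁ hsgn₁
    rw [hg0, hgt] at hlen₂ hsgn₂
    rw [C.v_val 0 C.hn0] at hlen₁ hsgn₁ hlen₂ hsgn₂
    rw [C.Q_zero, mul_one, mul_one] at hsgn₁ hsgn₂
    apply hne
    rw [hsgn₁, hsgn₂]
    exact C.sign_eq_of_one h1 (by omega)
  · exact h1

end Ctx
end Stmt2Aux
namespace Stmt2Aux

/-- Chicken–McNugget: every `M ≥ (n-1)(c-1)` is representable as `w·n + b·c`. -/
lemma cm_rep (n c M : ℕ) (hn : 2 ≤ n) (hc : 2 ≤ c) (hcop : Nat.Coprime n c)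
    (hM : (n - 1) * (c - 1) ≤ M) : ∃ w b : ℕ, M = w * n + b * c := by
  haveI : NeZero n := ⟨by omega⟩
  have hcu : IsUnit ((c : ℕ) : ZMod n) := by
    rw [ZMod.isUnit_iff_coprime]
    exact hcop.symm
  set z : ZMod n := (M : ZMod n) * ((c : ℕ) : ZMod n)⁻¹ with hz
  set b : ℕ := z.val with hbdef
  have hb : b < n := ZMod.val_lt z
  have hbc : ((b * c : ℕ) : ZMod n) = (M : ZMod n) := by
    push_cast
    rw [hbdef, ZMod.natCast_val, ZMod.cast_id, hz, mul_assoc,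
      ZMod.inv_mul_of_unit _ hcu, mul_one]
  have hmodeq : b * c ≡ M [MOD n] := (ZMod.natCast_eq_natCast_iff (b * c) M n).mp hbc
  have hdvd : (n : ℤ) ∣ (M : ℤ) - (b * c : ℤ) := by
    have := Nat.ModEq.dvd hmodeq
    exact_mod_cast this
  obtain ⟨q, hq⟩ := hdvd
  have hMz : ((n : ℤ) - 1) * ((c : ℤ) - 1) ≤ (M : ℤ) := by
    have : (((n - 1) * (c - 1) : ℕ) : ℤ) ≤ (M : ℤ) := by exact_mod_cast hM
    rw [Nat.cast_mul, Nat.cast_sub (by omega), Nat.cast_sub (by omega)] at this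
    exact_mod_cast this
  have hbcz : (b : ℤ) * c ≤ ((n : ℤ) - 1) * c := by
    have hble : (b : ℤ) ≤ (n : ℤ) - 1 := by
      have : b + 1 ≤ n := by omega
      have := (Nat.cast_le (α := ℤ)).mpr this
      push_cast at this
      linarith
    have : (0 : ℤ) ≤ c := by positivity
    exact mul_le_mul_of_nonneg_right hble this
  have hq0 : 0 ≤ q := by
    by_contra h
    push_neg at h
    have hq1 : q ≤ -1 := by omega
    have : (n : ℤ) * q ≤ (n : ℤ) * (-1) :=
      mul_le_mul_of_nonneg_left hq1 (by positivity)
    nlinarith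
  refine ⟨q.toNat, b, ?_⟩
  have : (M : ℤ) = (q.toNat : ℤ) * n + (b : ℤ) * c := by
    rw [Int.toNat_of_nonneg hq0]
    linarith
  exact_mod_cast this

end Stmt2Aux
namespace Stmt2Aux
namespace Ctx

variable (C : Ctx)

lemma hws_head (u : Fin C.n) : C.HWS u.val u (C.v 0) (C.Q u.val) := by
  have h := C.hws_down u.val u.val (by have := u.isLt; omega) le_rfl
  rw [C.v_eq u, Nat.sub_self] at h
  rwa [C.Q_zero, mul_one] at h

lemma hws_chordloop : C.HWS C.c (C.v 0) (C.v 0) C.eps := by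
  have h1 := C.hws_chord 0 C.hi1
  rw [show (0:ℕ) + C.c - 1 = C.c - 1 by omega] at h1
  have h2 := C.hws_down (C.c - 1) (C.c - 1) (by have := C.hcn; omega) le_rfl
  rw [Nat.sub_self] at h2
  have := C.hws_append h1 h2
  rw [show 1 + (C.c - 1) = C.c by have := C.hc2; omega] at this
  rw [C.Q_zero, mul_one] at this
  exact this

/-- The `E` walk: from `0` to `x ≤ c+i-2` using `aE ∈ {1,2}` chords, no wraps. -/
lemma hws_E (x : ℕ) (hx : x + 2 ≤ C.c + C.i) :
    ∃ aE : ℕ, 1 ≤ aE ∧ aE ≤ 2 ∧ x < aE * C.c ∧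
      C.HWS (aE * C.c - x) (C.v 0) (C.v x) (C.eps ^ aE * C.Q x) := by
  have hc2 := C.hc2
  have hicc := C.hicc
  have hci := C.hci
  have hcn := C.hcn
  by_cases hxc : x + 1 ≤ C.c
  · refine ⟨1, le_rfl, by omega, by omega, ?_⟩
    have h1 := C.hws_chord 0 C.hi1
    rw [show (0:ℕ) + C.c - 1 = C.c - 1 by omega] at h1
    have h2 := C.hws_down (C.c - 1) (C.c - 1 - x) (by have := C.hcn; omega) (by omega)
    rw [show C.c - 1 - (C.c - 1 - x) = x by omega] at h2
    have h := C.hws_append h1 h2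
    rw [show 1 + (C.c - 1 - x) = 1 * C.c - x by omega] at h
    rw [← mul_assoc, show C.ch 0 * C.Q (C.c - 1) = C.eps from rfl,
      ← pow_one C.eps] at h
    exact h
  · -- x ≥ c, second chord at τ = x - c + 1
    obtain ⟨τ, hτdef⟩ : ∃ τ : ℕ, τ = x - C.c + 1 := ⟨_, rfl⟩
    have hτ1 : 1 ≤ τ := by omega
    have hτi : τ + 1 ≤ C.i := by omega
    refine ⟨2, by omega, le_rfl, by omega, ?_⟩
    have h1 := C.hws_chord 0 C.hi1
    rw [show (0:ℕ) + C.c - 1 = C.c - 1 by omega] at h1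
    have h2 := C.hws_down (C.c - 1) (C.c - 1 - τ) (by have := C.hcn; omega) (by omega)
    rw [show C.c - 1 - (C.c - 1 - τ) = τ by omega] at h2
    have h3 := C.hws_chord τ hτi
    rw [show τ + C.c - 1 = x by omega] at h3
    have h := C.hws_append (C.hws_append h1 h2) h3
    rw [show 1 + (C.c - 1 - τ) + 1 = 2 * C.c - x by omega] at h
    have hsgn : C.ch 0 * (C.Q (C.c - 1) * C.Q τ) * C.ch τ = C.eps ^ 2 * C.Q x := by
      have he := C.eps_chord τ hτi
      rw [show τ + C.c - 1 = x by omega] at he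
      -- he : ch τ * Q x = eps * Q τ
      have hQx : C.Q x * C.Q x = 1 := C.Q_sq x (by omega)
      have hQτ : C.Q τ * C.Q τ = 1 := C.Q_sq τ (by omega)
      have he2 : C.ch τ * C.Q τ = C.eps * C.Q x := by
        calc C.ch τ * C.Q τ = (C.ch τ * C.Q x) * (C.Q x * C.Q τ) := by
              rw [show C.ch τ * C.Q x * (C.Q x * C.Q τ)
                  = C.ch τ * (C.Q x * C.Q x) * C.Q τ by ring, hQx]; ring
          _ = (C.eps * C.Q τ) * (C.Q x * C.Q τ) := by rw [he]
          _ = C.eps * C.Q x * (C.Q τ * C.Q τ) := by ring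
          _ = C.eps * C.Q x := by rw [hQτ]; ring
      calc C.ch 0 * (C.Q (C.c-1) * C.Q τ) * C.ch τ
          = (C.ch 0 * C.Q (C.c-1)) * (C.ch τ * C.Q τ) := by ring
        _ = C.eps * (C.eps * C.Q x) := by
              rw [show C.ch 0 * C.Q (C.c-1) = C.eps from rfl, he2]
        _ = C.eps ^ 2 * C.Q x := by ring
    rwa [hsgn] at h

end Ctx
end Stmt2Aux
namespace Stmt2Aux
namespace Ctx

variable (C : Ctx)

lemma hasSSSD_of_hws {t : ℕ} {u v : Fin C.n} {σ₁ σ₂ : ℤ}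
    (h1 : C.HWS t u v σ₁) (h2 : C.HWS t u v σ₂) (hm : σ₁ * σ₂ = -1) :
    C.S.HasSSSD t u v := by
  obtain ⟨f, hf0, hft, hfw, hfs⟩ := h1
  obtain ⟨g, hg0, hgt, hgw, hgs⟩ := h2
  refine ⟨f, g, ⟨hf0, hft, hfw⟩, ⟨hg0, hgt, hgw⟩, ?_⟩
  rw [hfs, hgs]
  intro h
  rw [h] at hm
  nlinarith [mul_self_nonneg σ₂]

lemma nc_id : (C.n - 1) * (C.c - 1) + C.n + C.c = C.n * C.c + 1 := by
  have h1 : 1 ≤ C.n := by have := C.hn3; omega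
  have h2 : 1 ≤ C.c := by have := C.hc2; omega
  zify [h1, h2]
  ring

/-- SSSD walks when the target needs a final wrap (`θ = 1`); works for every `v`. -/
lemma sssd_theta1 (hkey : C.del ^ C.c * C.eps ^ C.n = -1) (u v : Fin C.n) (t : ℕ)
    (ht : u.val + C.n + 2 * (C.n * C.c) + 1 ≤ t + v.val + C.n + C.c) :
    C.S.HasSSSD t u v := by
  have hn3 := C.hn3
  have hc2 := C.hc2
  have hnc1 := C.nc_id
  have hvn : v.val + 1 ≤ C.n := v.isLt
  have hA : u.val + C.n + C.n * C.c + (C.n - 1) * (C.c - 1) ≤ t + v.val := by linarith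
  have hA' : u.val + C.n + C.n * C.c ≤ t + v.val := by
    linarith [Nat.zero_le ((C.n - 1) * (C.c - 1))]
  obtain ⟨M, hM⟩ : ∃ M, t + v.val = u.val + C.n + C.n * C.c + M :=
    ⟨t + v.val - (u.val + C.n + C.n * C.c), by omega⟩
  have hMge : (C.n - 1) * (C.c - 1) ≤ M := by linarith
  obtain ⟨w', b, hwb⟩ := cm_rep C.n C.c M (by omega) (by omega) C.hcop hMge
  -- pieces
  have Whead := C.hws_head u
  have Wloop1 := C.hws_iterate C.hws_loop w'
  have Wloop2 := C.hws_iterate C.hws_loop (w' + C.c)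
  have Wch1 := C.hws_iterate C.hws_chordloop (C.n + b)
  have Wch2 := C.hws_iterate C.hws_chordloop b
  have WT := C.hws_T v.val (by omega)
  rw [C.v_eq v] at WT
  have W1 := C.hws_append (C.hws_append (C.hws_append Whead Wloop1) Wch1) WT
  have W2 := C.hws_append (C.hws_append (C.hws_append Whead Wloop2) Wch2) WT
  have hnb : (C.n + b) * C.c = C.n * C.c + b * C.c := Nat.add_mul _ _ _
  have hwc : (w' + C.c) * C.n = w' * C.n + C.c * C.n := Nat.add_mul _ _ _
  have hcn' : C.c * C.n = C.n * C.c := mul_comm _ _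
  have hsub : (C.n - v.val) + v.val = C.n := by omega
  have hlen1 : u.val + w' * C.n + (C.n + b) * C.c + (C.n - v.val) = t := by linarith
  have hlen2 : u.val + (w' + C.c) * C.n + b * C.c + (C.n - v.val) = t := by linarith
  rw [hlen1] at W1
  rw [hlen2] at W2
  apply C.hasSSSD_of_hws W1 W2
  have hQu := C.Q_sq u.val (by have := u.isLt; omega)
  have hQv := C.Q_sq v.val (by omega)
  have hδ := C.del_sq
  have hε := C.eps_sq
  have hid : C.Q u.val * C.del ^ w' * C.eps ^ (C.n + b) * (C.del * C.Q v.val) *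
      (C.Q u.val * C.del ^ (w' + C.c) * C.eps ^ b * (C.del * C.Q v.val)) =
      (C.del ^ C.c * C.eps ^ C.n) *
      ((C.Q u.val * C.Q u.val) * (C.Q v.val * C.Q v.val) *
        ((C.del * C.del) ^ (w' + 1)) * ((C.eps * C.eps) ^ b)) := by
    rw [mul_pow, mul_pow]
    ring
  calc C.Q u.val * C.del ^ w' * C.eps ^ (C.n + b) * (C.del * C.Q v.val) *
      (C.Q u.val * C.del ^ (w' + C.c) * C.eps ^ b * (C.del * C.Q v.val))
      = (C.del ^ C.c * C.eps ^ C.n) *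
        ((C.Q u.val * C.Q u.val) * (C.Q v.val * C.Q v.val) *
          ((C.del * C.del) ^ (w' + 1)) * ((C.eps * C.eps) ^ b)) := hid
    _ = -1 := by rw [hQu, hQv, hδ, hε, one_pow, one_pow, hkey]; ring

/-- SSSD walks when the target is reachable from a chord head (`θ = 0`). -/
lemma sssd_theta0 (hkey : C.del ^ C.c * C.eps ^ C.n = -1) (u v : Fin C.n)
    (hv : v.val + 2 ≤ C.c + C.i) (t : ℕ)
    (ht : u.val + 2 * (C.n * C.c) + 1 ≤ t + v.val + C.n + C.c) :
    C.S.HasSSSD t u v := by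
  have hn3 := C.hn3
  have hc2 := C.hc2
  have hnc1 := C.nc_id
  have hvn : v.val + 1 ≤ C.n := v.isLt
  have hA' : u.val + C.n * C.c ≤ t + v.val := by
    linarith [Nat.zero_le ((C.n - 1) * (C.c - 1))]
  obtain ⟨M, hM⟩ : ∃ M, t + v.val = u.val + C.n * C.c + M :=
    ⟨t + v.val - (u.val + C.n * C.c), by omega⟩
  have hMge : (C.n - 1) * (C.c - 1) ≤ M := by linarith
  obtain ⟨w', b, hwb⟩ := cm_rep C.n C.c M (by omega) (by omega) C.hcop hMge
  obtain ⟨aE, haE1, haE2, haEx, WE⟩ := C.hws_E v.val hv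
  rw [C.v_eq v] at WE
  have Whead := C.hws_head u
  have Wloop1 := C.hws_iterate C.hws_loop w'
  have Wloop2 := C.hws_iterate C.hws_loop (w' + C.c - 1)
  have Wch1 := C.hws_iterate C.hws_chordloop (C.n + b - aE)
  have Wch2 := C.hws_iterate C.hws_chordloop b
  have WT := C.hws_T v.val (by omega)
  rw [C.v_eq v] at WT
  have W1 := C.hws_append (C.hws_append (C.hws_append Whead Wloop1) Wch1) WE
  have W2 := C.hws_append (C.hws_append (C.hws_append Whead Wloop2) Wch2) WT
  have h1 : (C.n + b - aE) * C.c + aE * C.c = C.n * C.c + b * C.c := by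
    rw [← Nat.add_mul, show C.n + b - aE + aE = C.n + b by omega, Nat.add_mul]
  have h2 : (aE * C.c - v.val) + v.val = aE * C.c := Nat.sub_add_cancel (le_of_lt haEx)
  have h3 : (w' + C.c - 1) * C.n + C.n = w' * C.n + C.c * C.n := by
    rw [← Nat.succ_mul, show (w' + C.c - 1).succ = w' + C.c by omega, Nat.add_mul]
  have hcn' : C.c * C.n = C.n * C.c := mul_comm _ _
  have hsub : (C.n - v.val) + v.val = C.n := by omega
  have hlen1 : u.val + w' * C.n + (C.n + b - aE) * C.c + (aE * C.c - v.val) = t := by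
    linarith
  have hlen2 : u.val + (w' + C.c - 1) * C.n + b * C.c + (C.n - v.val) = t := by linarith
  rw [hlen1] at W1
  rw [hlen2] at W2
  apply C.hasSSSD_of_hws W1 W2
  have hQu := C.Q_sq u.val (by have := u.isLt; omega)
  have hQv := C.Q_sq v.val (by omega)
  have hδ := C.del_sq
  have hε := C.eps_sq
  have hmerge : C.eps ^ (C.n + b - aE) * C.eps ^ aE = C.eps ^ (C.n + b) := by
    rw [← pow_add, show C.n + b - aE + aE = C.n + b by omega]
  have hmerge2 : C.del ^ (w' + C.c - 1) * C.del = C.del ^ (w' + C.c) := by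
    rw [← pow_succ, show w' + C.c - 1 + 1 = w' + C.c by omega]
  have hσ1 : C.Q u.val * C.del ^ w' * C.eps ^ (C.n + b - aE) * (C.eps ^ aE * C.Q v.val)
      = C.Q u.val * C.del ^ w' * C.eps ^ (C.n + b) * C.Q v.val := by
    calc C.Q u.val * C.del ^ w' * C.eps ^ (C.n + b - aE) * (C.eps ^ aE * C.Q v.val)
        = C.Q u.val * C.del ^ w' *
            (C.eps ^ (C.n + b - aE) * C.eps ^ aE) * C.Q v.val := by ring
      _ = _ := by rw [hmerge]
  have hσ2 : C.Q u.val * C.del ^ (w' + C.c - 1) * C.eps ^ b * (C.del * C.Q v.val)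
      = C.Q u.val * C.del ^ (w' + C.c) * C.eps ^ b * C.Q v.val := by
    calc C.Q u.val * C.del ^ (w' + C.c - 1) * C.eps ^ b * (C.del * C.Q v.val)
        = C.Q u.val * (C.del ^ (w' + C.c - 1) * C.del) * C.eps ^ b * C.Q v.val := by
          ring
      _ = _ := by rw [hmerge2]
  rw [hσ1, hσ2]
  have hid : C.Q u.val * C.del ^ w' * C.eps ^ (C.n + b) * C.Q v.val *
      (C.Q u.val * C.del ^ (w' + C.c) * C.eps ^ b * C.Q v.val) =
      (C.del ^ C.c * C.eps ^ C.n) *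
      ((C.Q u.val * C.Q u.val) * (C.Q v.val * C.Q v.val) *
        ((C.del * C.del) ^ w') * ((C.eps * C.eps) ^ b)) := by
    rw [mul_pow, mul_pow]
    ring
  rw [hid, hQu, hQv, hδ, hε, one_pow, one_pow, hkey]
  ring

end Ctx
end Stmt2Aux
namespace Stmt2Aux

/-- Uniqueness of walk parameters at the critical length. -/
lemma uniq_sol (n c w a : ℕ) (hn : 3 ≤ n) (hc : 2 ≤ c) (hcop : Nat.Coprime n c)
    (heq : w * n + (a + 1) * c = 2 * (n * c)) (hcon : 1 ≤ a → 1 ≤ w) :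
    a = n - 1 ∧ w = c := by
  have hn0 : 0 < n := by omega
  have hc0 : 0 < c := by omega
  have hwle : w ≤ 2 * c := by
    have h1 : w * n ≤ (2 * c) * n := by
      have : (2*c)*n = 2*(n*c) := by ring
      linarith [Nat.zero_le ((a+1)*c)]
    exact Nat.le_of_mul_le_mul_right h1 hn0
  have hfac : (a + 1) * c = n * (2 * c - w) := by
    zify [hwle]
    have hz : (w:ℤ) * n + (a+1) * c = 2 * (n * c) := by exact_mod_cast heq
    ring_nf
    ring_nf at hz
    linarith
  have hdvd : n ∣ (a + 1) * c := ⟨2 * c - w, hfac⟩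
  have hdn : n ∣ a + 1 := hcop.dvd_of_dvd_mul_right hdvd
  obtain ⟨s, hs⟩ := hdn
  have hs0 : s ≠ 0 := by
    intro h
    rw [h, Nat.mul_zero] at hs
    omega
  have hsle : s ≤ 2 := by
    by_contra h
    push_neg at h
    have h1 : (a + 1) * c ≤ 2 * (n * c) := by linarith [Nat.zero_le (w * n)]
    rw [hs] at h1
    have h2 : n * 3 * c ≤ n * s * c :=
      Nat.mul_le_mul_right c (Nat.mul_le_mul_left n (by omega))
    have h4 : n * 3 * c = 3 * (n * c) := by ring
    have h3 : 0 < n * c := Nat.mul_pos hn0 hc0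
    have h5 : n * s * c = (n * s) * c := rfl
    linarith
  have hs12 : s = 1 ∨ s = 2 := by omega
  rcases hs12 with h | h
  · rw [h, Nat.mul_one] at hs
    rw [hs] at heq
    have hwn : w * n = c * n := by
      have h6 : n * c = c * n := mul_comm _ _
      linarith
    have hw : w = c := Nat.eq_of_mul_eq_mul_right hn0 hwn
    omega
  · exfalso
    rw [h] at hs
    rw [hs] at heq
    have h7 : (n * 2) * c = 2 * (n * c) := by ring
    have hw0 : w * n = 0 := by linarith
    have hw : w = 0 := by
      rcases Nat.mul_eq_zero.mp hw0 with h' | h'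
      · exact h'
      · omega
    have ha1 : 1 ≤ a := by omega
    have := hcon ha1
    omega

namespace Ctx

variable (C : Ctx)

/-- From equal structure parameters, the two walk signs agree. -/
lemma signs_agree {t : ℕ} {f g : ℕ → Fin C.n} {w a : ℕ}
    (h1 : C.S.walkSign t f * C.Q (f t).val = C.del ^ w * C.eps ^ a * C.Q (f 0).val)
    (h2 : C.S.walkSign t g * C.Q (g t).val = C.del ^ w * C.eps ^ a * C.Q (g 0).val)
    (hft : (f t).val = (g t).val) (hf0 : (f 0).val = (g 0).val)
    (hQ : C.Q (f t).val * C.Q (f t).val = 1) :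
    C.S.walkSign t f = C.S.walkSign t g := by
  rw [hft, hf0] at h1
  calc C.S.walkSign t f
      = C.S.walkSign t f * (C.Q (f t).val * C.Q (f t).val) := by rw [hQ]; ring
    _ = (C.S.walkSign t f * C.Q (g t).val) * C.Q (f t).val := by rw [hft]; ring
    _ = (C.S.walkSign t g * C.Q (g t).val) * C.Q (f t).val := by rw [h1, h2]
    _ = C.S.walkSign t g * (C.Q (f t).val * C.Q (f t).val) := by rw [hft]; ring
    _ = C.S.walkSign t g := by rw [hQ]; ring

lemma no_sssd_A (hik' : C.i ≤ C.k) (u : Fin C.n) (t : ℕ)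
    (ht : t + (2 * C.c + C.i) = u.val + 2 * (C.n * C.c) + 1) :
    ¬ C.S.HasSSSD t u ⟨C.c + C.i - 1, by have := C.hck; have := C.hc2; omega⟩ := by
  have hck := C.hck
  have hc2 := C.hc2
  have hi1 := C.hi1
  have hn3 := C.hn3
  rintro ⟨f, g, ⟨hf0, hft, hfw⟩, ⟨hg0, hgt, hgw⟩, hne⟩
  obtain ⟨w₁, a₁, hlen₁, hsgn₁, hnec₁⟩ := C.walk_struct t f hfw
  obtain ⟨w₂, a₂, hlen₂, hsgn₂, hnec₂⟩ := C.walk_struct t g hgw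
  have hfv : (f t).val = C.c + C.i - 1 := by rw [hft]
  have hgv : (g t).val = C.c + C.i - 1 := by rw [hgt]
  have hfu : (f 0).val = u.val := by rw [hf0]
  have hgu : (g 0).val = u.val := by rw [hg0]
  rw [hfv, hfu] at hlen₁
  rw [hgv, hgu] at hlen₂
  have hVa : (C.c + C.i - 1) + 1 = C.c + C.i := by omega
  have hx1 : (a₁ + 1) * C.c = a₁ * C.c + C.c := by ring
  have hx2 : (a₂ + 1) * C.c = a₂ * C.c + C.c := by ring
  have heq₁ : w₁ * C.n + (a₁ + 1) * C.c = 2 * (C.n * C.c) := by linarith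
  have heq₂ : w₂ * C.n + (a₂ + 1) * C.c = 2 * (C.n * C.c) := by linarith
  have hcon₁ : 1 ≤ a₁ → 1 ≤ w₁ := by
    intro ha
    by_contra hw
    have := hnec₁ (by omega) ha
    rw [hfv] at this
    omega
  have hcon₂ : 1 ≤ a₂ → 1 ≤ w₂ := by
    intro ha
    by_contra hw
    have := hnec₂ (by omega) ha
    rw [hgv] at this
    omega
  obtain ⟨ha₁, hw₁⟩ := uniq_sol C.n C.c w₁ a₁ hn3 hc2 C.hcop heq₁ hcon₁
  obtain ⟨ha₂, hw₂⟩ := uniq_sol C.n C.c w₂ a₂ hn3 hc2 C.hcop heq₂ hcon₂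
  subst ha₁ hw₁ ha₂ hw₂
  apply hne
  exact C.signs_agree hsgn₁ hsgn₂ (by rw [hfv, hgv]) (by rw [hfu, hgu])
    (by rw [hfv]; exact C.Q_sq _ (by omega))

lemma no_sssd_B (hik' : C.i = C.k + 1) (u : Fin C.n) (t : ℕ)
    (ht : t + (2 * C.c + C.i) = u.val + 2 * (C.n * C.c) + 1) :
    ¬ C.S.HasSSSD t u ⟨0, C.hn0⟩ := by
  have hck := C.hck
  have hc2 := C.hc2
  have hi1 := C.hi1
  have hn3 := C.hn3
  rintro ⟨f, g, ⟨hf0, hft, hfw⟩, ⟨hg0, hgt, hgw⟩, hne⟩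
  obtain ⟨w₁, a₁, hlen₁, hsgn₁, hnec₁⟩ := C.walk_struct t f hfw
  obtain ⟨w₂, a₂, hlen₂, hsgn₂, hnec₂⟩ := C.walk_struct t g hgw
  have hfv : (f t).val = 0 := by rw [hft]
  have hgv : (g t).val = 0 := by rw [hgt]
  have hfu : (f 0).val = u.val := by rw [hf0]
  have hgu : (g 0).val = u.val := by rw [hg0]
  rw [hfv, hfu] at hlen₁
  rw [hgv, hgu] at hlen₂
  have hx1 : (a₁ + 1) * C.c = a₁ * C.c + C.c := by ring
  have hx2 : (a₂ + 1) * C.c = a₂ * C.c + C.c := by ring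
  have hy1 : (w₁ + 1) * C.n = w₁ * C.n + C.n := by ring
  have hy2 : (w₂ + 1) * C.n = w₂ * C.n + C.n := by ring
  have hi2c : 2 * C.c + C.i = C.n + C.c + 1 := by omega
  have heq₁ : (w₁ + 1) * C.n + (a₁ + 1) * C.c = 2 * (C.n * C.c) := by linarith
  have heq₂ : (w₂ + 1) * C.n + (a₂ + 1) * C.c = 2 * (C.n * C.c) := by linarith
  obtain ⟨ha₁, hw₁⟩ := uniq_sol C.n C.c (w₁ + 1) a₁ hn3 hc2 C.hcop heq₁ (fun _ => by omega)
  obtain ⟨ha₂, hw₂⟩ := uniq_sol C.n C.c (w₂ + 1) a₂ hn3 hc2 C.hcop heq₂ (fun _ => by omega)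
  have hww : w₁ = w₂ := by omega
  subst ha₁ ha₂ hww
  apply hne
  exact C.signs_agree hsgn₁ hsgn₂ (by rw [hfv, hgv]) (by rw [hfu, hgu])
    (by rw [hfv]; exact C.Q_sq _ (by omega))

/-- The exact local base at every vertex. -/
lemma localBase_eq (hpn : C.S.IsPrimitiveNonpowerful) (u : Fin C.n) :
    C.S.localBase u = u.val + 2 * (C.n * C.c) + 2 - (2 * C.c + C.i) := by
  have hkey := C.key hpn
  have hn3 := C.hn3
  have hc2 := C.hc2
  have hicc := C.hicc
  have hci := C.hci
  have hck := C.hck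
  have hi1 := C.hi1
  have h3c : 3 * C.c ≤ C.n * C.c := Nat.mul_le_mul_right C.c hn3
  have hle : 2 * C.c + C.i ≤ u.val + 2 * (C.n * C.c) + 2 := by linarith
  obtain ⟨B, hB⟩ : ∃ B, B + (2 * C.c + C.i) = u.val + 2 * (C.n * C.c) + 2 :=
    ⟨_, Nat.sub_add_cancel hle⟩
  have hBval : u.val + 2 * (C.n * C.c) + 2 - (2 * C.c + C.i) = B :=
    Nat.sub_eq_of_eq_add hB.symm
  rw [hBval]
  have hBmem : B ∈ {l : ℕ | ∀ t ≥ l, ∀ v : Fin C.n, C.S.HasSSSD t u v} := by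
    intro t htB vv
    by_cases hv : vv.val + 2 ≤ C.c + C.i
    · exact C.sssd_theta0 hkey u vv hv t (by linarith [Nat.zero_le vv.val])
    · push_neg at hv
      exact C.sssd_theta1 hkey u vv t (by linarith)
  unfold SignedDigraph.localBase
  apply le_antisymm
  · exact Nat.sInf_le hBmem
  · apply le_csInf ⟨B, hBmem⟩
    intro l hl
    by_contra hlt
    push_neg at hlt
    have hB1 : 1 ≤ B := by linarith
    have hsssd := hl (B - 1) (by omega)
    have htB1 : (B - 1) + (2 * C.c + C.i) = u.val + 2 * (C.n * C.c) + 1 := by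
      have h9 : (B - 1) + 1 = B := by omega
      linarith
    rcases Nat.lt_or_ge C.i (C.k + 1) with hik' | hik'
    · exact C.no_sssd_A (by omega) u (B - 1) htB1 (hsssd _)
    · exact C.no_sssd_B (le_antisymm C.hik hik') u (B - 1) htB1 (hsssd _)

end Ctx
end Stmt2Aux
namespace Stmt2Aux

/-- `kthSmallest` of a strictly increasing affine family. -/
lemma kth_eq {N : ℕ} (f : Fin N → ℕ) (B : ℕ) (hf : ∀ x : Fin N, f x = B + x.val)
    (m : ℕ) (hm1 : 1 ≤ m) (hm2 : m ≤ N) :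
    kthSmallest f m = B + (m - 1) := by
  unfold kthSmallest
  have hofn : Finset.univ.val.map f = (((List.range N).map (fun x => B + x) : List ℕ) :
      Multiset ℕ) := by
    rw [Fin.univ_val_map]
    congr 1
    apply List.ext_getElem
    · simp
    · intro j h1 h2
      simp only [List.getElem_ofFn, List.getElem_map, List.getElem_range]
      rw [hf]
  have hsorted : List.Pairwise (· ≤ ·) ((List.range N).map (fun x => B + x)) :=
    List.Pairwise.map _ (fun a b hab => by omega) (List.pairwise_lt_range (n := N))
  have hpm : (Multiset.sort (Finset.univ.val.map f) (· ≤ ·)).Perm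
      ((List.range N).map (fun x => B + x)) := by
    apply Multiset.coe_eq_coe.mp
    rw [Multiset.sort_eq, hofn]
  have hperm := List.Perm.eq_of_pairwise' (Multiset.pairwise_sort _ _) hsorted hpm
  rw [hperm]
  have hlen : ((List.range N).map (fun x => B + x)).length = N := by simp
  rw [List.getD_eq_getElem _ _ (by omega)]
  simp

end Stmt2Aux
/-- Let `gcd(n, n-k) = 1`, `1 ≤ i ≤ min{k+1, n-k-1}`, and let
`S_{k,i}` be a primitive nonpowerful signed digraph with underlying digraph
`D_{k,i}`. If all cycles of length `n-k` have the same sign, then for every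
`1 ≤ m ≤ n` the `m`-th smallest local base is attained at `v_m` and equals
`(2n-2)(n-k) + 1 - i + m`. -/
theorem stmt2 (n k i : ℕ) (hn : 0 < n) (hk : 0 < k)
    (hgcd : Nat.gcd n (n - k) = 1)
    (hi1 : 1 ≤ i) (hi2 : i ≤ min (k + 1) (n - k - 1))
    (S : SignedDigraph (Fin n)) (hadj : S.Adj = DkiAdj n k i)
    (hpn : S.IsPrimitiveNonpowerful)
    (hsgn : S.SameSignCycles (n - k)) :
    ∀ m : ℕ, ∀ _hm1 : 1 ≤ m, ∀ _hm2 : m ≤ n,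
      kthSmallest S.localBase m = S.localBase ⟨m - 1, by omega⟩ ∧
      S.localBase ⟨m - 1, by omega⟩ = (2 * n - 2) * (n - k) + 1 - i + m := by
  intro m hm1 hm2
  rw [le_min_iff] at hi2
  obtain ⟨hik, hinc⟩ := hi2
  have hic : i + k + 1 ≤ n := by omega
  have hn3 : 3 ≤ n := by omega
  set C : Stmt2Aux.Ctx := ⟨n, k, i, S, hk, hi1, hik, hic, hgcd, hadj, hsgn⟩ with hC
  have hLB : ∀ x : Fin n, S.localBase x =
      x.val + 2 * (n * (n - k)) + 2 - (2 * (n - k) + i) := fun x =>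
    C.localBase_eq hpn x
  obtain ⟨P, hP⟩ : ∃ P, P = n * (n - k) := ⟨_, rfl⟩
  obtain ⟨R, hR⟩ : ∃ R, R = (2 * n - 2) * (n - k) := ⟨_, rfl⟩
  have hPR : R + 2 * (n - k) = 2 * P := by
    rw [hP, hR]
    zify [show 2 ≤ 2 * n by omega, show k ≤ n by omega]
    ring
  have h3c : 3 * (n - k) ≤ P := by
    rw [hP]
    exact Nat.mul_le_mul_right (n - k) hn3
  have hf : ∀ x : Fin n, S.localBase x =
      (2 * (n * (n - k)) + 2 - (2 * (n - k) + i)) + x.val := by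
    intro x
    rw [hLB x, ← hP]
    omega
  constructor
  · rw [Stmt2Aux.kth_eq S.localBase _ hf m hm1 hm2,
      hf ⟨m - 1, by omega⟩]
  · rw [hLB ⟨m - 1, by omega⟩, ← hP, ← hR]
    have hval : (⟨m - 1, by omega⟩ : Fin n).val = m - 1 := rfl
    rw [hval]
    omega
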